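/- For (m_1,m_2,m_3) ∈ ℝ³_{≥0} let P(m_1,m_2,m_3) ⊆ ℝ⁶ be the polytope of points (r_1,r_2,r_3,r_{12},r_{23},r_{13}) with all six coordinates ≥ 0 satisfying r_1 ≤ m_1, r_2 ≤ m_2, r_3 ≤ m_3, r_1+r_{12}+r_2 ≤ m_1+m_2, r_2+r_{23}+r_3 ≤ m_2+m_3, r_1+r_{12}+r_2+r_{23}+r_3 ≤ m_1+m_2+m_3, and r_1+r_{12}+r_{13}+r_{23}+r_3 ≤ m_1+m_2+m_3. Then every lattice point z ∈ P(1,1,1) ∩ ℤ⁶ can be written as z = z_1 + z_2 + z_3 with z_1 ∈ P(1,0,0) ∩ ℤ⁶, z_2 ∈ P(0,1,0) ∩ ℤ⁶ and z_3 ∈ P(0,0,1) ∩ ℤ⁶. -/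

import Mathlib

/-- The FFLV polytope `P(m₁,m₂,m₃)` of `Flag₄` in `ℝ⁶`, with coordinates
`(r₁, r₂, r₃, r₁₂, r₂₃, r₁₃)` indexed by `0,…,5`. -/
def FFLVPolytope4 (m1 m2 m3 : ℝ) : Set (Fin 6 → ℝ) :=
  {r | (∀ i, 0 ≤ r i) ∧
    r 0 ≤ m1 ∧ r 1 ≤ m2 ∧ r 2 ≤ m3 ∧
    r 0 + r 3 + r 1 ≤ m1 + m2 ∧
    r 1 + r 4 + r 2 ≤ m2 + m3 ∧
    r 0 + r 3 + r 1 + r 4 + r 2 ≤ m1 + m2 + m3 ∧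
    r 0 + r 3 + r 5 + r 4 + r 2 ≤ m1 + m2 + m3}

def opts1 : Fin 4 → (Fin 6 → ℕ) :=
  ![![0,0,0,0,0,0], ![1,0,0,0,0,0], ![0,0,0,1,0,0], ![0,0,0,0,0,1]]
def opts2 : Fin 6 → (Fin 6 → ℕ) :=
  ![![0,0,0,0,0,0], ![0,1,0,0,0,0], ![0,0,0,1,0,0], ![0,0,0,0,1,0], ![0,0,0,0,0,1],
    ![0,1,0,0,0,1]]
def opts3 : Fin 4 → (Fin 6 → ℕ) :=
  ![![0,0,0,0,0,0], ![0,0,1,0,0,0], ![0,0,0,0,1,0], ![0,0,0,0,0,1]]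

set_option maxHeartbeats 4000000 in
set_option synthInstance.maxSize 4000 in
set_option synthInstance.maxHeartbeats 1000000 in
set_option maxRecDepth 10000 in
lemma key : ∀ (a b c : Fin 2) (d e : Fin 3) (f : Fin 4),
    a.val + d.val + b.val ≤ 2 → b.val + e.val + c.val ≤ 2 →
    a.val + d.val + b.val + e.val + c.val ≤ 3 →
    a.val + d.val + f.val + e.val + c.val ≤ 3 →
    ∃ i : Fin 4, ∃ j : Fin 6, ∃ k : Fin 4,
      a.val = opts1 i 0 + opts2 j 0 + opts3 k 0 ∧
      b.val = opts1 i 1 + opts2 j 1 + opts3 k 1 ∧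
      c.val = opts1 i 2 + opts2 j 2 + opts3 k 2 ∧
      d.val = opts1 i 3 + opts2 j 3 + opts3 k 3 ∧
      e.val = opts1 i 4 + opts2 j 4 + opts3 k 4 ∧
      f.val = opts1 i 5 + opts2 j 5 + opts3 k 5 := by decide

lemma cv5 (a b c d e f : ℕ) : (![a,b,c,d,e,f] : Fin 6 → ℕ) 5 = f := rfl
lemma cv2 (a b c d e f : ℕ) : (![a,b,c,d,e,f] : Fin 6 → ℕ) 2 = c := rfl
lemma cv3 (a b c d e f : ℕ) : (![a,b,c,d,e,f] : Fin 6 → ℕ) 3 = d := rfl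
lemma cv4 (a b c d e f : ℕ) : (![a,b,c,d,e,f] : Fin 6 → ℕ) 4 = e := rfl

lemma mem1 (i : Fin 4) : (fun t => ((opts1 i t : ℕ) : ℝ)) ∈ FFLVPolytope4 1 0 0 := by
  fin_cases i <;>
    refine ⟨fun t => ?_, ?_, ?_, ?_, ?_, ?_, ?_, ?_⟩ <;>
    first | (fin_cases t <;> norm_num [opts1]) | norm_num [opts1, cv5, cv2, cv3, cv4]

lemma mem2 (j : Fin 6) : (fun t => ((opts2 j t : ℕ) : ℝ)) ∈ FFLVPolytope4 0 1 0 := by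
  fin_cases j <;>
    refine ⟨fun t => ?_, ?_, ?_, ?_, ?_, ?_, ?_, ?_⟩ <;>
    first | (fin_cases t <;> norm_num [opts2]) | norm_num [opts2, cv5, cv2, cv3, cv4]

lemma mem3 (k : Fin 4) : (fun t => ((opts3 k t : ℕ) : ℝ)) ∈ FFLVPolytope4 0 0 1 := by
  fin_cases k <;>
    refine ⟨fun t => ?_, ?_, ?_, ?_, ?_, ?_, ?_, ?_⟩ <;>
    first | (fin_cases t <;> norm_num [opts3]) | norm_num [opts3, cv5, cv2, cv3, cv4]


/-- The weak Minkowski property of the FFLV polytope of `Flag₄` for `ρ`: every lattice point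
of `P(1,1,1)` is the sum of lattice points of `P(1,0,0)`, `P(0,1,0)` and `P(0,0,1)`. -/
theorem fflv4_weak_minkowski (z : Fin 6 → ℤ)
    (hz : (fun i => (z i : ℝ)) ∈ FFLVPolytope4 1 1 1) :
    ∃ z1 z2 z3 : Fin 6 → ℤ,
      (fun i => (z1 i : ℝ)) ∈ FFLVPolytope4 1 0 0 ∧
      (fun i => (z2 i : ℝ)) ∈ FFLVPolytope4 0 1 0 ∧
      (fun i => (z3 i : ℝ)) ∈ FFLVPolytope4 0 0 1 ∧
      z = z1 + z2 + z3 := by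
  obtain ⟨hpos, h0, h1, h2, h3, h4, h5, h6⟩ := hz
  simp only at hpos h0 h1 h2 h3 h4 h5 h6
  have p0 : (0:ℤ) ≤ z 0 := by exact_mod_cast hpos 0
  have p1 : (0:ℤ) ≤ z 1 := by exact_mod_cast hpos 1
  have p2 : (0:ℤ) ≤ z 2 := by exact_mod_cast hpos 2
  have p3 : (0:ℤ) ≤ z 3 := by exact_mod_cast hpos 3
  have p4 : (0:ℤ) ≤ z 4 := by exact_mod_cast hpos 4
  have p5 : (0:ℤ) ≤ z 5 := by exact_mod_cast hpos 5
  have b0 : z 0 ≤ 1 := by exact_mod_cast h0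
  have b1 : z 1 ≤ 1 := by exact_mod_cast h1
  have b2 : z 2 ≤ 1 := by exact_mod_cast h2
  have b3 : z 0 + z 3 + z 1 ≤ 2 := by exact_mod_cast h3
  have b4 : z 1 + z 4 + z 2 ≤ 2 := by exact_mod_cast h4
  have b5 : z 0 + z 3 + z 1 + z 4 + z 2 ≤ 3 := by exact_mod_cast h5
  have b6 : z 0 + z 3 + z 5 + z 4 + z 2 ≤ 3 := by exact_mod_cast h6
  have hA : (z 0).toNat < 2 := by omega
  have hB : (z 1).toNat < 2 := by omega
  have hC : (z 2).toNat < 2 := by omega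
  have hD : (z 3).toNat < 3 := by omega
  have hE : (z 4).toNat < 3 := by omega
  have hF : (z 5).toNat < 4 := by omega
  obtain ⟨i, j, k, e0, e1, e2, e3, e4, e5⟩ :=
    key ⟨(z 0).toNat, hA⟩ ⟨(z 1).toNat, hB⟩ ⟨(z 2).toNat, hC⟩
      ⟨(z 3).toNat, hD⟩ ⟨(z 4).toNat, hE⟩ ⟨(z 5).toNat, hF⟩
      (by show (z 0).toNat + (z 3).toNat + (z 1).toNat ≤ 2; omega)
      (by show (z 1).toNat + (z 4).toNat + (z 2).toNat ≤ 2; omega)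
      (by show (z 0).toNat + (z 3).toNat + (z 1).toNat + (z 4).toNat + (z 2).toNat ≤ 3; omega)
      (by show (z 0).toNat + (z 3).toNat + (z 5).toNat + (z 4).toNat + (z 2).toNat ≤ 3; omega)
  simp only [Fin.val_mk] at e0 e1 e2 e3 e4 e5
  have E0 : z 0 = (opts1 i 0 : ℤ) + (opts2 j 0 : ℤ) + (opts3 k 0 : ℤ) := by omega
  have E1 : z 1 = (opts1 i 1 : ℤ) + (opts2 j 1 : ℤ) + (opts3 k 1 : ℤ) := by omega
  have E2 : z 2 = (opts1 i 2 : ℤ) + (opts2 j 2 : ℤ) + (opts3 k 2 : ℤ) := by omega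
  have E3 : z 3 = (opts1 i 3 : ℤ) + (opts2 j 3 : ℤ) + (opts3 k 3 : ℤ) := by omega
  have E4 : z 4 = (opts1 i 4 : ℤ) + (opts2 j 4 : ℤ) + (opts3 k 4 : ℤ) := by omega
  have E5 : z 5 = (opts1 i 5 : ℤ) + (opts2 j 5 : ℤ) + (opts3 k 5 : ℤ) := by omega
  refine ⟨fun t => (opts1 i t : ℤ), fun t => (opts2 j t : ℤ), fun t => (opts3 k t : ℤ),
    by exact_mod_cast mem1 i, by exact_mod_cast mem2 j, by exact_mod_cast mem3 k, ?_⟩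
  funext t
  fin_cases t
  · exact E0
  · exact E1
  · exact E2
  · exact E3
  · exact E4
  · exact E5
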